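/- Let $R = k[X_0,\dots,X_m]/J$ be a graded domain with weights $A_i > 0$, $A = \mathrm{lcm}(A_0,\dots,A_m)$, $a_i = A/A_i$, and $I = R_{\geq mA}$. Fix $p \geq 2$ and assume $I^{p-1} = R_{\geq (p-1)mA}$. Let $X_0^{c_0}\cdots X_m^{c_m}$ be a monomial of degree $\geq pmA$, fix $1 \leq n \leq m$ with $c_i \geq a_i$ for $0 \leq i < n$, and let $k_i$ be the positive integers with $k_i a_i \leq c_i < (k_i+1)a_i$ for $i < n$. If $k_0 + \cdots + k_{n-1} \geq m$, then $X_0^{c_0}\cdots X_m^{c_m} \in I^p$. -/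

import Mathlib

set_option synthInstance.maxHeartbeats 400000
set_option maxHeartbeats 800000

open MvPolynomial

lemma exists_le_sum_eq {ι : Type*} [DecidableEq ι] (s : Finset ι) (f : ι → ℕ) (n : ℕ)
    (h : n ≤ ∑ i ∈ s, f i) :
    ∃ g : ι → ℕ, (∀ i, g i ≤ f i) ∧ (∀ i ∉ s, g i = 0) ∧ ∑ i ∈ s, g i = n := by
  induction s using Finset.induction_on generalizing n with
  | empty =>
    simp only [Finset.sum_empty, Nat.le_zero] at h
    exact ⟨0, fun i => Nat.zero_le _, fun i _ => rfl, by simp [h]⟩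
  | @insert a s has ih =>
    rw [Finset.sum_insert has] at h
    by_cases hn : n ≤ ∑ i ∈ s, f i
    · obtain ⟨g, hg1, hg2, hg3⟩ := ih _ hn
      refine ⟨g, hg1, fun i hi => hg2 i fun hmem => hi (Finset.mem_insert_of_mem hmem), ?_⟩
      rw [Finset.sum_insert has, hg2 a has, hg3, zero_add]
    · push_neg at hn
      refine ⟨fun i => if i = a then n - ∑ j ∈ s, f j else if i ∈ s then f i else 0,
        ?_, ?_, ?_⟩
      · intro i
        by_cases hia : i = a
        · subst hia; simp only [if_pos]; omega
        · simp only []; rw [if_neg hia]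
          split <;> simp
      · intro i hi
        simp only [Finset.mem_insert, not_or] at hi
        simp [hi.1, hi.2]
      · rw [Finset.sum_insert has, if_pos rfl]
        have : ∑ i ∈ s, (if i = a then n - ∑ j ∈ s, f j else if i ∈ s then f i else 0)
            = ∑ i ∈ s, f i := by
          apply Finset.sum_congr rfl
          intro i hi
          rw [if_neg (by rintro rfl; exact has hi), if_pos hi]
        rw [this]
        omega

theorem stmt8 (m : ℕ) (hm : 1 ≤ m) (k : Type*) [CommRing k] [IsDomain k]
    (A : Fin (m + 1) → ℕ) (hApos : ∀ i, 0 < A i)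
    (L : ℕ) (hL : L = Finset.univ.lcm A)
    (a : Fin (m + 1) → ℕ) (ha : ∀ i, a i = L / A i)
    (J : Ideal (MvPolynomial (Fin (m + 1)) k))
    (hJhom : ∀ f ∈ J, ∀ d : ℕ, weightedHomogeneousComponent A d f ∈ J)
    [IsDomain (MvPolynomial (Fin (m + 1)) k ⧸ J)]
    (I : Ideal (MvPolynomial (Fin (m + 1)) k ⧸ J))
    (hI : I = Ideal.map (Ideal.Quotient.mk J)
      (Ideal.span {f | ∃ d : ℕ, m * L ≤ d ∧ IsWeightedHomogeneous A f d}))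
    (p : ℕ) (hp : 2 ≤ p)
    (hIp : I ^ (p - 1) = Ideal.map (Ideal.Quotient.mk J)
      (Ideal.span {f | ∃ d : ℕ, (p - 1) * m * L ≤ d ∧ IsWeightedHomogeneous A f d}))
    (c : Fin (m + 1) → ℕ)
    (hdeg : p * m * L ≤ ∑ i, c i * A i)
    (n : ℕ) (hn1 : 1 ≤ n) (hnm : n ≤ m)
    (hca : ∀ i : Fin (m + 1), (i : ℕ) < n → a i ≤ c i)
    (K : Fin (m + 1) → ℕ)
    (hK : ∀ i : Fin (m + 1), (i : ℕ) < n →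
      1 ≤ K i ∧ K i * a i ≤ c i ∧ c i < (K i + 1) * a i)
    (hsum : m ≤ ∑ i ∈ Finset.univ.filter (fun i : Fin (m + 1) => (i : ℕ) < n), K i) :
    Ideal.Quotient.mk J (∏ i, X i ^ c i) ∈ I ^ p := by
  classical
  have haA : ∀ i : Fin (m + 1), a i * A i = L := by
    intro i
    rw [ha i]
    exact Nat.div_mul_cancel (hL ▸ Finset.dvd_lcm (Finset.mem_univ i))
  obtain ⟨d, hd1, hd2, hd3⟩ := exists_le_sum_eq
    (Finset.univ.filter (fun i : Fin (m + 1) => (i : ℕ) < n)) K m hsum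
  have hdc : ∀ i, d i * a i ≤ c i := by
    intro i
    by_cases hi : (i : ℕ) < n
    · calc d i * a i ≤ K i * a i := Nat.mul_le_mul_right _ (hd1 i)
        _ ≤ c i := (hK i hi).2.1
    · rw [hd2 i (by simp [hi]), zero_mul]
      exact Nat.zero_le _
  have hdsum : ∑ i, d i = m :=
    (Finset.sum_subset (Finset.subset_univ _) (fun i _ hi => hd2 i hi)).symm.trans hd3
  have hmono : ∀ b : Fin (m + 1) → ℕ,
      IsWeightedHomogeneous A (∏ i, X i ^ b i : MvPolynomial (Fin (m + 1)) k)
        (∑ i, b i * A i) := by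
    intro b
    have heq : (∏ i, X i ^ b i : MvPolynomial (Fin (m + 1)) k)
        = monomial (Finsupp.equivFunOnFinite.symm b) 1 := by
      rw [← prod_X_pow_eq_monomial]
      rw [Finset.prod_subset (Finset.subset_univ
        ((Finsupp.equivFunOnFinite.symm b).support))
        (fun x _ hx => by rw [Finsupp.notMem_support_iff.mp hx, pow_zero])]
      exact Finset.prod_congr rfl fun x _ => by simp
    rw [heq]
    apply isWeightedHomogeneous_monomial
    rw [Finsupp.weight_apply, Finsupp.sum_fintype]
    · simp [mul_comm]
    · intro i; simp
  have degF : ∑ i, d i * a i * A i = m * L := by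
    calc ∑ i, d i * a i * A i = ∑ i, d i * L := by
          exact Finset.sum_congr rfl fun i _ => by rw [mul_assoc, haA i]
      _ = (∑ i, d i) * L := by rw [← Finset.sum_mul]
      _ = m * L := by rw [hdsum]
  have hsub : ∑ i, (c i - d i * a i) * A i = (∑ i, c i * A i) - m * L := by
    have : ∀ i : Fin (m + 1), (c i - d i * a i) * A i = c i * A i - d i * a i * A i :=
      fun i => Nat.sub_mul _ _ _
    rw [Finset.sum_congr rfl fun i _ => this i,
      Finset.sum_tsub_distrib _ (fun i _ => Nat.mul_le_mul_right _ (hdc i)), degF]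
  have degG : (p - 1) * m * L ≤ ∑ i, (c i - d i * a i) * A i := by
    rw [hsub]
    apply Nat.le_sub_of_add_le
    have h1 : (p - 1) * m * L + m * L = p * m * L := by
      have hp1 : p - 1 + 1 = p := by omega
      conv_rhs => rw [← hp1]
      ring
    rw [h1]
    exact hdeg
  have hsplit : (∏ i, X i ^ c i : MvPolynomial (Fin (m + 1)) k)
      = (∏ i, X i ^ (d i * a i)) * ∏ i, X i ^ (c i - d i * a i) := by
    rw [← Finset.prod_mul_distrib]
    apply Finset.prod_congr rfl
    intro i _
    rw [← pow_add]
    congr 1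
    have := hdc i
    omega
  have hF : Ideal.Quotient.mk J (∏ i, X i ^ (d i * a i)) ∈ I := by
    rw [hI]
    refine Ideal.mem_map_of_mem _ (Ideal.subset_span ⟨m * L, le_refl _, ?_⟩)
    rw [← degF]
    exact hmono _
  have hG : Ideal.Quotient.mk J (∏ i, X i ^ (c i - d i * a i)) ∈ I ^ (p - 1) := by
    rw [hIp]
    exact Ideal.mem_map_of_mem _ (Ideal.subset_span ⟨_, degG, hmono _⟩)
  rw [hsplit, map_mul]
  have hIpow : I ^ p = I * I ^ (p - 1) := by
    conv_lhs => rw [show p = (p - 1) + 1 by omega]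
    exact pow_succ' I (p - 1)
  rw [hIpow]
  exact Ideal.mul_mem_mul hF hG
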